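/- If G = ABA is a nontrivial triple factorisation of a finite group G (i.e. A ≠ G and B ≠ G), then |G| ≤ |A|²|B|/|A∩B|² − |A||B|/|A∩B| + |B|. -/

import Mathlib

open scoped Pointwise
open Finset

namespace TripleFactAux

variable {G : Type*} [Group G] [Fintype G]

open scoped Classical in
noncomputable def fsg (A : Subgroup G) : Finset G := Finset.univ.filter (· ∈ A)

open scoped Classical in
noncomputable def fab (A B : Subgroup G) : Finset G :=
  Finset.univ.filter (fun x => ∃ a ∈ A, ∃ b ∈ B, a * b = x)

open scoped Classical in
noncomputable def vv (A B : Subgroup G) (g : G) : ℕ :=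
  ((fab A B).filter (fun x => x * g⁻¹ ∈ B)).card

lemma mem_fsg {A : Subgroup G} {x : G} : x ∈ fsg A ↔ x ∈ A := by
  classical simp [fsg]

lemma mem_fab {A B : Subgroup G} {x : G} :
    x ∈ fab A B ↔ ∃ a ∈ A, ∃ b ∈ B, a * b = x := by
  classical simp [fab]

lemma card_fsg (A : Subgroup G) : (fsg A).card = Nat.card A := by
  classical
  rw [Nat.card_eq_fintype_card, Fintype.card_subtype]
  congr 1

variable {A B : Subgroup G}

lemma sub_mem_fab {x : G} (hx : x ∈ B) : x ∈ fab A B :=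
  mem_fab.2 ⟨1, one_mem A, x, hx, one_mul x⟩

lemma fab_mul_right {x b : G} (hb : b ∈ B) (hx : x ∈ fab A B) : x * b ∈ fab A B := by
  obtain ⟨a, ha, b₁, hb₁, rfl⟩ := mem_fab.1 hx
  exact mem_fab.2 ⟨a, ha, b₁ * b, mul_mem hb₁ hb, (mul_assoc _ _ _).symm⟩

/-- v (b*g) = v g for b ∈ B -/
lemma vv_left {b : G} (hb : b ∈ B) (g : G) : vv A B (b * g) = vv A B g := by
  classical
  unfold vv
  congr 1
  apply Finset.filter_congr
  intro x _
  have : x * (b * g)⁻¹ = x * g⁻¹ * b⁻¹ := by group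
  rw [this, mul_mem_cancel_right (inv_mem hb)]

/-- v (g*b) = v g for b ∈ B -/
lemma vv_right (g : G) {b : G} (hb : b ∈ B) : vv A B (g * b) = vv A B g := by
  classical
  unfold vv
  apply Finset.card_bij' (fun x _ => x * b⁻¹) (fun y _ => y * b)
  · intro x hx
    rw [Finset.mem_filter] at hx ⊢
    refine ⟨fab_mul_right (inv_mem hb) hx.1, ?_⟩
    have : x * b⁻¹ * g⁻¹ = x * (g * b)⁻¹ := by group
    rw [this]; exact hx.2
  · intro y hy
    rw [Finset.mem_filter] at hy ⊢
    refine ⟨fab_mul_right hb hy.1, ?_⟩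
    have : y * b * (g * b)⁻¹ = y * g⁻¹ := by group
    rw [this]; exact hy.2
  · intro x _; group
  · intro y _; group

lemma vv_mem_B {g : G} (hg : g ∈ B) : vv A B g = (fsg B).card := by
  classical
  unfold vv
  congr 1
  ext x
  simp only [Finset.mem_filter, mem_fsg]
  constructor
  · rintro ⟨-, h2⟩
    have := mul_mem h2 hg
    simpa [mul_assoc] using this
  · intro hx
    exact ⟨sub_mem_fab hx, mul_mem hx (inv_mem hg)⟩

open scoped Classical in
lemma vv_alt (g : G) :
    vv A B g = ((fsg B).filter (fun b => b * g ∈ fab A B)).card := by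
  classical
  unfold vv
  apply Finset.card_bij' (fun x _ => x * g⁻¹) (fun y _ => y * g)
  · intro x hx
    rw [Finset.mem_filter] at hx ⊢
    rw [mem_fsg]
    exact ⟨hx.2, by simpa [inv_mul_cancel_right] using hx.1⟩
  · intro y hy
    rw [Finset.mem_filter] at hy ⊢
    rw [mem_fsg] at hy
    exact ⟨hy.2, by simpa [mul_inv_cancel_right] using hy.1⟩
  · intro x _; group
  · intro y _; group

/-- Σ_g v g = |AB| * |B| -/
lemma sum_vv : ∑ g : G, vv A B g = (fab A B).card * (fsg B).card := by
  classical
  have h1 : ∀ g : G, vv A B g = ∑ x ∈ fab A B, if x * g⁻¹ ∈ B then 1 else 0 := by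
    intro g; rw [vv, Finset.card_filter]
  simp_rw [h1]
  rw [Finset.sum_comm]
  have h2 : ∀ x : G, ∑ g : G, (if x * g⁻¹ ∈ B then 1 else 0) = (fsg B).card := by
    intro x
    rw [← Finset.card_filter]
    apply Finset.card_bij' (fun g _ => x * g⁻¹) (fun b _ => b⁻¹ * x)
    · intro g hg
      rw [Finset.mem_filter] at hg
      rw [mem_fsg]; exact hg.2
    · intro b hb
      rw [mem_fsg] at hb
      simp only [Finset.mem_filter, Finset.mem_univ, true_and]
      have : x * (b⁻¹ * x)⁻¹ = b := by group
      rw [this]; exact hb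
    · intro g _; group
    · intro b _; group
  simp_rw [h2]
  rw [Finset.sum_const, smul_eq_mul]


/-- Σ_g (v g)^2 = |B| * Σ_{x ∈ AB} v x -/
lemma sum_vv_sq :
    ∑ g : G, (vv A B g) ^ 2 = (fsg B).card * ∑ x ∈ fab A B, vv A B x := by
  classical
  have h1 : ∀ g : G, (vv A B g) ^ 2 =
      ∑ x ∈ fab A B, ∑ y ∈ fab A B,
        (if x * g⁻¹ ∈ B then 1 else 0) * (if y * g⁻¹ ∈ B then 1 else 0) := by
    intro g
    rw [sq, vv, Finset.card_filter, ← Finset.sum_mul_sum]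
  simp_rw [h1]
  rw [Finset.sum_comm]
  have h2 : ∀ x ∈ fab A B,
      (∑ g : G, ∑ y ∈ fab A B,
        (if x * g⁻¹ ∈ B then 1 else 0) * (if y * g⁻¹ ∈ B then 1 else 0))
      = (fsg B).card * vv A B x := by
    intro x _
    rw [Finset.sum_comm]
    have h3 : ∀ y : G, (∑ g : G,
        (if x * g⁻¹ ∈ B then 1 else 0) * (if y * g⁻¹ ∈ B then 1 else 0))
        = if y * x⁻¹ ∈ B then (fsg B).card else 0 := by
      intro y
      by_cases hyx : y * x⁻¹ ∈ B
      · rw [if_pos hyx]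
        have he : ∀ g : G,
            (if x * g⁻¹ ∈ B then 1 else 0) * (if y * g⁻¹ ∈ B then 1 else 0)
            = if x * g⁻¹ ∈ B then 1 else 0 := by
          intro g
          by_cases hx : x * g⁻¹ ∈ B
          · have hy : y * g⁻¹ ∈ B := by
              have := mul_mem hyx hx
              simpa [mul_assoc] using this
            simp [hx, hy]
          · simp [hx]
        simp_rw [he]
        rw [← Finset.card_filter]
        apply Finset.card_bij' (fun g _ => x * g⁻¹) (fun b _ => b⁻¹ * x)
        · intro g hg
          rw [Finset.mem_filter] at hg
          rw [mem_fsg]; exact hg.2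
        · intro b hb
          rw [mem_fsg] at hb
          simp only [Finset.mem_filter, Finset.mem_univ, true_and]
          have : x * (b⁻¹ * x)⁻¹ = b := by group
          rw [this]; exact hb
        · intro g _; group
        · intro b _; group
      · rw [if_neg hyx]
        apply Finset.sum_eq_zero
        intro g _
        by_cases hx : x * g⁻¹ ∈ B
        · by_cases hy : y * g⁻¹ ∈ B
          · exfalso
            apply hyx
            have := mul_mem hy (inv_mem hx)
            have e : y * g⁻¹ * (x * g⁻¹)⁻¹ = y * x⁻¹ := by group
            rwa [e] at this
          · simp [hy]
        · simp [hx]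
    simp_rw [h3]
    rw [← Finset.sum_filter, Finset.sum_const, smul_eq_mul, mul_comm]
    congr 1
  rw [Finset.sum_congr rfl h2, ← Finset.mul_sum]


open scoped Classical in
/-- the fiber of multiplication over x ∈ AB has size |A ∩ B| -/
lemma card_fiber_ab {x : G} (hx : x ∈ fab A B) :
    (((fsg A) ×ˢ (fsg B)).filter (fun p => p.1 * p.2 = x)).card
      = (fsg (A ⊓ B)).card := by
  classical
  obtain ⟨a₀, ha₀, b₀, hb₀, rfl⟩ := mem_fab.1 hx
  symm
  apply Finset.card_bij' (fun h _ => ((a₀ * h, h⁻¹ * b₀) : G × G))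
    (fun p _ => a₀⁻¹ * p.1)
  · intro h hh
    rw [mem_fsg, Subgroup.mem_inf] at hh
    simp only [Finset.mem_filter, Finset.mem_product, mem_fsg]
    refine ⟨⟨mul_mem ha₀ hh.1, mul_mem (inv_mem hh.2) hb₀⟩, by group⟩
  · intro p hp
    simp only [Finset.mem_filter, Finset.mem_product, mem_fsg] at hp
    rw [mem_fsg, Subgroup.mem_inf]
    obtain ⟨⟨h1, h2⟩, h3⟩ := hp
    constructor
    · exact mul_mem (inv_mem ha₀) h1
    · have key2 : a₀⁻¹ * p.1 * p.2 = b₀ * p.2⁻¹ * p.2 := by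
        rw [mul_assoc, h3]; group
      have : a₀⁻¹ * p.1 = b₀ * p.2⁻¹ := mul_right_cancel key2
      rw [this]
      exact mul_mem hb₀ (inv_mem h2)
  · intro h _; group
  · intro p hp
    simp only [Finset.mem_filter, Finset.mem_product, mem_fsg] at hp
    obtain ⟨⟨h1, h2⟩, h3⟩ := hp
    have e1 : a₀ * (a₀⁻¹ * p.1) = p.1 := by group
    have e2 : (a₀⁻¹ * p.1)⁻¹ * b₀ = p.2 := by
      have e3 : (a₀⁻¹ * p.1)⁻¹ * b₀ = p.1⁻¹ * (a₀ * b₀) := by group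
      rw [e3, ← h3]; group
    exact Prod.ext e1 e2
  
/-- |A| * |B| = |AB| * |A ∩ B| -/
lemma card_mul_eq : (fsg A).card * (fsg B).card
    = (fab A B).card * (fsg (A ⊓ B)).card := by
  classical
  rw [← Finset.card_product]
  rw [Finset.card_eq_sum_card_fiberwise
    (f := fun p : G × G => p.1 * p.2) (t := fab A B)
    (fun p hp => by
      simp only [Finset.mem_coe, Finset.mem_product, mem_fsg] at hp
      exact mem_fab.2 ⟨p.1, hp.1, p.2, hp.2, rfl⟩)]
  rw [Finset.sum_congr rfl (fun x hx => card_fiber_ab hx), Finset.sum_const,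
    smul_eq_mul]

/-- the star identity: |A∩B| * Σ_{x∈AB} v x = |B| * Σ_{a∈A} v a -/
lemma star_identity :
    (fsg (A ⊓ B)).card * ∑ x ∈ fab A B, vv A B x
      = (fsg B).card * ∑ a ∈ fsg A, vv A B a := by
  classical
  have key : ∑ p ∈ (fsg A) ×ˢ (fsg B), vv A B (p.1 * p.2)
      = ∑ x ∈ fab A B, ∑ p ∈ ((fsg A) ×ˢ (fsg B)).filter
          (fun p => p.1 * p.2 = x), vv A B (p.1 * p.2) :=
    (Finset.sum_fiberwise_of_maps_to (fun p hp => by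
      simp only [Finset.mem_product, mem_fsg] at hp
      exact mem_fab.2 ⟨p.1, hp.1, p.2, hp.2, rfl⟩) _).symm
  have lhs2 : ∀ x ∈ fab A B,
      (∑ p ∈ ((fsg A) ×ˢ (fsg B)).filter (fun p => p.1 * p.2 = x),
        vv A B (p.1 * p.2)) = (fsg (A ⊓ B)).card * vv A B x := by
    intro x hx
    calc ∑ p ∈ ((fsg A) ×ˢ (fsg B)).filter (fun p => p.1 * p.2 = x),
          vv A B (p.1 * p.2)
        = ∑ _p ∈ ((fsg A) ×ˢ (fsg B)).filter (fun p => p.1 * p.2 = x),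
          vv A B x :=
          Finset.sum_congr rfl (fun p hp => by rw [(Finset.mem_filter.1 hp).2])
      _ = (fsg (A ⊓ B)).card * vv A B x := by
          rw [Finset.sum_const, smul_eq_mul, card_fiber_ab hx]
  have rhs2 : ∑ p ∈ (fsg A) ×ˢ (fsg B), vv A B (p.1 * p.2)
      = (fsg B).card * ∑ a ∈ fsg A, vv A B a := by
    rw [Finset.sum_product]
    have : ∀ a ∈ fsg A, ∑ b ∈ fsg B, vv A B (a * b) = (fsg B).card * vv A B a := by
      intro a _
      rw [Finset.sum_congr rfl (fun b hb => vv_right a (mem_fsg.1 hb)),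
        Finset.sum_const, smul_eq_mul]
    rw [Finset.sum_congr rfl this, ← Finset.mul_sum]
  rw [← rhs2, key, Finset.sum_congr rfl lhs2, ← Finset.mul_sum]


open scoped Classical in
/-- finset of the product set BA -/
noncomputable def fba (A B : Subgroup G) : Finset G :=
  Finset.univ.filter (fun x => ∃ b ∈ B, ∃ a ∈ A, b * a = x)

lemma mem_fba {x : G} : x ∈ fba A B ↔ ∃ b ∈ B, ∃ a ∈ A, b * a = x := by
  classical simp [fba]

open scoped Classical in
lemma card_fiber_ba {x : G} (hx : x ∈ fba A B) :
    (((fsg B) ×ˢ (fsg A)).filter (fun p => p.1 * p.2 = x)).card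
      = (fsg (A ⊓ B)).card := by
  classical
  obtain ⟨b₀, hb₀, a₀, ha₀, rfl⟩ := mem_fba.1 hx
  symm
  apply Finset.card_bij' (fun h _ => ((b₀ * h, h⁻¹ * a₀) : G × G))
    (fun p _ => b₀⁻¹ * p.1)
  · intro h hh
    rw [mem_fsg, Subgroup.mem_inf] at hh
    simp only [Finset.mem_filter, Finset.mem_product, mem_fsg]
    refine ⟨⟨mul_mem hb₀ hh.2, mul_mem (inv_mem hh.1) ha₀⟩, by group⟩
  · intro p hp
    simp only [Finset.mem_filter, Finset.mem_product, mem_fsg] at hp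
    rw [mem_fsg, Subgroup.mem_inf]
    obtain ⟨⟨h1, h2⟩, h3⟩ := hp
    have key2 : b₀⁻¹ * p.1 * p.2 = a₀ * p.2⁻¹ * p.2 := by
      rw [mul_assoc, h3]; group
    have e : b₀⁻¹ * p.1 = a₀ * p.2⁻¹ := mul_right_cancel key2
    constructor
    · rw [e]; exact mul_mem ha₀ (inv_mem h2)
    · exact mul_mem (inv_mem hb₀) h1
  · intro h _; group
  · intro p hp
    simp only [Finset.mem_filter, Finset.mem_product, mem_fsg] at hp
    obtain ⟨⟨h1, h2⟩, h3⟩ := hp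
    have e1 : b₀ * (b₀⁻¹ * p.1) = p.1 := by group
    have e2 : (b₀⁻¹ * p.1)⁻¹ * a₀ = p.2 := by
      have e3 : (b₀⁻¹ * p.1)⁻¹ * a₀ = p.1⁻¹ * (b₀ * a₀) := by group
      rw [e3, ← h3]; group
    exact Prod.ext e1 e2

lemma card_mul_eq' : (fsg B).card * (fsg A).card
    = (fba A B).card * (fsg (A ⊓ B)).card := by
  classical
  rw [← Finset.card_product]
  rw [Finset.card_eq_sum_card_fiberwise
    (f := fun p : G × G => p.1 * p.2) (t := fba A B)
    (fun p hp => by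
      simp only [Finset.mem_coe, Finset.mem_product, mem_fsg] at hp
      exact mem_fba.2 ⟨p.1, hp.1, p.2, hp.2, rfl⟩)]
  rw [Finset.sum_congr rfl (fun x hx => card_fiber_ba hx), Finset.sum_const,
    smul_eq_mul]

/-- constancy on BA -/
lemma sum_vv_const_on_ba {x : G} (hx : x ∈ fba A B) :
    ∑ a ∈ fsg A, vv A B (x * a) = ∑ a ∈ fsg A, vv A B a := by
  classical
  obtain ⟨b₀, hb₀, a₀, ha₀, rfl⟩ := mem_fba.1 hx
  have h1 : ∀ a ∈ fsg A, vv A B (b₀ * a₀ * a) = vv A B (a₀ * a) := by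
    intro a _
    rw [mul_assoc]
    exact vv_left hb₀ _
  rw [Finset.sum_congr rfl h1]
  apply Finset.sum_bij' (fun a _ => a₀ * a) (fun a _ => a₀⁻¹ * a)
  · intro a ha; rw [mem_fsg] at ha ⊢; exact mul_mem ha₀ ha
  · intro a ha; rw [mem_fsg] at ha ⊢; exact mul_mem (inv_mem ha₀) ha
  · intro a _; group
  · intro a _; group
  · intro a _; rfl

/-- master inequality, from G = ABA -/
lemma master (hABA : (A : Set G) * (B : Set G) * (A : Set G) = Set.univ)
    (g : G) :
    (fsg (A ⊓ B)).card * (fsg B).card ≤ ∑ a ∈ fsg A, vv A B (g * a) := by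
  classical
  have h1 : ∀ a ∈ fsg A, vv A B (g * a)
      = ∑ b ∈ fsg B, if b * (g * a) ∈ fab A B then 1 else 0 := by
    intro a _
    rw [vv_alt, Finset.card_filter]
  rw [Finset.sum_congr rfl h1, Finset.sum_comm]
  have h2 : ∀ b ∈ fsg B,
      (fsg (A ⊓ B)).card
        ≤ ∑ a ∈ fsg A, if b * (g * a) ∈ fab A B then 1 else 0 := by
    intro b hb
    rw [mem_fsg] at hb
    rw [← Finset.card_filter]
    have hbg : b * g ∈ (A : Set G) * (B : Set G) * (A : Set G) := by
      rw [hABA]; trivial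
    obtain ⟨y, hy, a₂, ha₂, hya⟩ := Set.mem_mul.1 hbg
    obtain ⟨a₁, ha₁, b₁, hb₁, rfl⟩ := Set.mem_mul.1 hy
    apply Finset.card_le_card_of_injOn (fun h => a₂⁻¹ * h)
    · intro h hh
      rw [Finset.mem_coe, mem_fsg, Subgroup.mem_inf] at hh
      rw [Finset.mem_coe, Finset.mem_filter, mem_fsg]
      constructor
      · exact mul_mem (inv_mem ha₂) hh.1
      · have e : b * (g * (a₂⁻¹ * h)) = (b * g) * a₂⁻¹ * h := by group
        rw [e, ← hya]
        have e2 : a₁ * b₁ * a₂ * a₂⁻¹ * h = a₁ * (b₁ * h) := by group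
        rw [e2]
        exact mem_fab.2 ⟨a₁, ha₁, b₁ * h, mul_mem hb₁ hh.2, rfl⟩
    · intro x _ y _ hxy
      exact mul_left_cancel hxy
  calc (fsg (A ⊓ B)).card * (fsg B).card
      = (fsg B).card * (fsg (A ⊓ B)).card := mul_comm _ _
    _ = ∑ _b ∈ fsg B, (fsg (A ⊓ B)).card := by
        rw [Finset.sum_const, smul_eq_mul]
    _ ≤ _ := Finset.sum_le_sum h2


lemma total_sum :
    ∑ g : G, (∑ a ∈ fsg A, vv A B (g * a))
      = (fsg A).card * ((fab A B).card * (fsg B).card) := by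
  classical
  rw [Finset.sum_comm]
  have h1 : ∀ a ∈ fsg A, (∑ g : G, vv A B (g * a))
      = (fab A B).card * (fsg B).card := by
    intro a _
    rw [show (∑ g : G, vv A B (g * a)) = ∑ g : G, vv A B ((Equiv.mulRight a) g)
        from rfl, Equiv.sum_comp (Equiv.mulRight a) (vv A B), sum_vv]
  rw [Finset.sum_congr rfl h1, Finset.sum_const, smul_eq_mul]

lemma split (hABA : (A : Set G) * (B : Set G) * (A : Set G) = Set.univ) :
    (fba A B).card * (∑ a ∈ fsg A, vv A B a)
      + (Fintype.card G - (fba A B).card)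
          * ((fsg (A ⊓ B)).card * (fsg B).card)
      ≤ (fsg A).card * ((fab A B).card * (fsg B).card) := by
  classical
  rw [← total_sum]
  have hsdiff : ∑ g ∈ (Finset.univ \ fba A B), (∑ a ∈ fsg A, vv A B (g * a))
      + ∑ g ∈ fba A B, (∑ a ∈ fsg A, vv A B (g * a))
      = ∑ g : G, (∑ a ∈ fsg A, vv A B (g * a)) :=
    Finset.sum_sdiff (Finset.subset_univ _)
  rw [← hsdiff]
  have h1 : ∑ g ∈ fba A B, (∑ a ∈ fsg A, vv A B (g * a))
      = (fba A B).card * (∑ a ∈ fsg A, vv A B a) := by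
    rw [Finset.sum_congr rfl (fun x hx => sum_vv_const_on_ba hx),
      Finset.sum_const, smul_eq_mul]
  have h2 : (Finset.univ \ fba A B).card
        * ((fsg (A ⊓ B)).card * (fsg B).card)
      ≤ ∑ g ∈ (Finset.univ \ fba A B), (∑ a ∈ fsg A, vv A B (g * a)) := by
    have := Finset.card_nsmul_le_sum (Finset.univ \ fba A B)
      (fun g => ∑ a ∈ fsg A, vv A B (g * a))
      ((fsg (A ⊓ B)).card * (fsg B).card)
      (fun g _ => master hABA g)
    simpa [smul_eq_mul] using this
  have h3 : (Finset.univ \ fba A B).card = Fintype.card G - (fba A B).card := by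
    rw [Finset.card_sdiff_of_subset (Finset.subset_univ _), Finset.card_univ]
  rw [h3] at h2
  omega

end TripleFactAux

set_option maxHeartbeats 8000000

/-- Upper bound for a nontrivial triple factorisation `G = ABA`:
`|G| ≤ |A|²|B|/|A∩B|² − |A||B|/|A∩B| + |B|`. -/
theorem card_bound_of_triple_factorisation
    (G : Type*) [Group G] [Fintype G] (A B : Subgroup G)
    (hA : A ≠ ⊤) (hB : B ≠ ⊤)
    (hABA : (A : Set G) * (B : Set G) * (A : Set G) = Set.univ) :
    (Nat.card G : ℚ) ≤
      (Nat.card A : ℚ) ^ 2 * (Nat.card B : ℚ) / (Nat.card (A ⊓ B : Subgroup G) : ℚ) ^ 2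
        - (Nat.card A : ℚ) * (Nat.card B : ℚ) / (Nat.card (A ⊓ B : Subgroup G) : ℚ)
        + (Nat.card B : ℚ) := by
  classical
  open TripleFactAux in
  rw [← card_fsg A, ← card_fsg B, ← card_fsg (A ⊓ B), Nat.card_eq_fintype_card]
  set aQ : ℚ := ((fsg A).card : ℚ) with haQ
  set bQ : ℚ := ((fsg B).card : ℚ) with hbQ
  set cQ : ℚ := ((fsg (A ⊓ B : Subgroup G)).card : ℚ) with hcQ
  set pQ : ℚ := ((fab A B).card : ℚ) with hpQ
  set gQ : ℚ := ((Fintype.card G : ℕ) : ℚ) with hgQ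
  set q : ℚ := ((∑ x ∈ fsg A, vv A B x : ℕ) : ℚ) with hq
  set s2 : ℚ := ((∑ x ∈ fab A B, vv A B x : ℕ) : ℚ) with hs2
  -- positivity and inclusion facts
  have hone_b : (1:G) ∈ fsg B := mem_fsg.2 (one_mem B)
  have hone_c : (1:G) ∈ fsg (A ⊓ B : Subgroup G) := mem_fsg.2 (one_mem _)
  have hb1 : (1:ℚ) ≤ bQ := by
    rw [hbQ]; exact_mod_cast Finset.card_pos.2 ⟨1, hone_b⟩
  have hc1 : (1:ℚ) ≤ cQ := by
    rw [hcQ]; exact_mod_cast Finset.card_pos.2 ⟨1, hone_c⟩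
  have hb0 : (0:ℚ) < bQ := lt_of_lt_of_le one_pos hb1
  have hc0 : (0:ℚ) < cQ := lt_of_lt_of_le one_pos hc1
  have hbpN : (fsg B).card ≤ (fab A B).card :=
    Finset.card_le_card (fun x hx => sub_mem_fab (mem_fsg.1 hx))
  have hbp : bQ ≤ pQ := by rw [hbQ, hpQ]; exact_mod_cast hbpN
  have hp0 : (0:ℚ) < pQ := lt_of_lt_of_le hb0 hbp
  have hpgN : (fab A B).card ≤ Fintype.card G := by
    rw [← Finset.card_univ]; exact Finset.card_le_univ _
  have hpg : pQ ≤ gQ := by rw [hpQ, hgQ]; exact_mod_cast hpgN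
  have hbgN : (fsg B).card ≤ Fintype.card G := by
    rw [← Finset.card_univ]; exact Finset.card_le_univ _
  -- cardinal identity |A||B| = |AB||A∩B|
  have hA1 : aQ * bQ = pQ * cQ := by
    rw [haQ, hbQ, hpQ, hcQ]; exact_mod_cast TripleFactAux.card_mul_eq
  -- |BA| = |AB|
  have hBAN : (fba A B).card = (fab A B).card := by
    have h1 := card_mul_eq (A := A) (B := B)
    have h2 := card_mul_eq' (A := A) (B := B)
    have hcpos : 0 < (fsg (A ⊓ B : Subgroup G)).card :=
      Finset.card_pos.2 ⟨1, hone_c⟩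
    apply Nat.eq_of_mul_eq_mul_right hcpos
    rw [← h2, mul_comm ((fsg B).card), h1]
  -- inequality (I)
  have hA2 : pQ * q + (gQ - pQ) * (cQ * bQ) ≤ aQ * (pQ * bQ) := by
    have h := split (A := A) (B := B) hABA
    rw [hBAN] at h
    have hle : (fab A B).card ≤ Fintype.card G := hpgN
    have hcast : ((fab A B).card * (∑ x ∈ fsg A, vv A B x)
        + (Fintype.card G - (fab A B).card)
            * ((fsg (A ⊓ B : Subgroup G)).card * (fsg B).card) : ℚ)
        ≤ (((fsg A).card * ((fab A B).card * (fsg B).card) : ℕ) : ℚ) := by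
      exact_mod_cast h
    rw [haQ, hpQ, hbQ, hcQ, hq, hgQ]
    push_cast [Nat.cast_sub hle] at hcast ⊢
    linarith
  -- star identity
  have hA3 : cQ * s2 = bQ * q := by
    rw [hcQ, hs2, hbQ, hq]; exact_mod_cast star_identity
  -- Σ_G v and Σ_G v², in ℚ
  have hsumQ : ∑ g : G, ((vv A B g : ℕ) : ℚ) = pQ * bQ := by
    rw [hpQ, hbQ]; exact_mod_cast sum_vv
  have hsumsqQ : ∑ g : G, ((vv A B g : ℕ) : ℚ) ^ 2 = bQ * s2 := by
    rw [hbQ, hs2]; exact_mod_cast sum_vv_sq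
  -- values on B
  have hSBsum : ∑ x ∈ fsg B, ((vv A B x : ℕ) : ℚ) = bQ * bQ := by
    rw [Finset.sum_congr rfl (fun x hx => by
      rw [vv_mem_B (mem_fsg.1 hx)]), Finset.sum_const, nsmul_eq_mul, hbQ]
  have hSBsumsq : ∑ x ∈ fsg B, ((vv A B x : ℕ) : ℚ) ^ 2 = bQ * bQ ^ 2 := by
    rw [Finset.sum_congr rfl (fun x hx => by
      rw [vv_mem_B (mem_fsg.1 hx)]), Finset.sum_const, nsmul_eq_mul, hbQ]
  -- Cauchy–Schwarz on G \ B
  have hCS : (∑ x ∈ Finset.univ \ fsg B, ((vv A B x : ℕ) : ℚ)) ^ 2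
      ≤ ((Finset.univ \ fsg B).card : ℚ)
        * ∑ x ∈ Finset.univ \ fsg B, ((vv A B x : ℕ) : ℚ) ^ 2 :=
    sq_sum_le_card_mul_sum_sq
  have hsd1 : ∑ x ∈ Finset.univ \ fsg B, ((vv A B x : ℕ) : ℚ)
      = pQ * bQ - bQ * bQ := by
    have := Finset.sum_sdiff (f := fun x => ((vv A B x : ℕ) : ℚ))
      (Finset.subset_univ (fsg B))
    rw [hSBsum] at this
    rw [← hsumQ]; linarith
  have hsd2 : ∑ x ∈ Finset.univ \ fsg B, ((vv A B x : ℕ) : ℚ) ^ 2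
      = bQ * s2 - bQ * bQ ^ 2 := by
    have := Finset.sum_sdiff (f := fun x => ((vv A B x : ℕ) : ℚ) ^ 2)
      (Finset.subset_univ (fsg B))
    rw [hSBsumsq] at this
    rw [← hsumsqQ]; linarith
  have hsdcard : ((Finset.univ \ fsg B).card : ℚ) = gQ - bQ := by
    rw [Finset.card_sdiff_of_subset (Finset.subset_univ _), Finset.card_univ, hgQ, hbQ,
      Nat.cast_sub hbgN]
  have hA5 : (pQ * bQ - bQ * bQ) ^ 2 ≤ (gQ - bQ) * (bQ * s2 - bQ * bQ ^ 2) := by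
    rw [← hsd1, ← hsd2, ← hsdcard]; exact hCS
  -- algebra
  have hgb : (0:ℚ) ≤ gQ - bQ := by linarith
  have hB1 : cQ * (pQ - bQ) ^ 2 ≤ (gQ - bQ) * (q - cQ * bQ) := by
    have h5c := mul_le_mul_of_nonneg_left hA5 (le_of_lt hc0)
    have e1 : cQ * ((pQ * bQ - bQ * bQ) ^ 2)
        = (bQ * bQ) * (cQ * (pQ - bQ) ^ 2) := by ring
    have e2 : cQ * ((gQ - bQ) * (bQ * s2 - bQ * bQ ^ 2))
        = (gQ - bQ) * (bQ * (cQ * s2) - cQ * bQ * bQ ^ 2) := by ring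
    rw [e1, e2, hA3] at h5c
    have e3 : (gQ - bQ) * (bQ * (bQ * q) - cQ * bQ * bQ ^ 2)
        = (bQ * bQ) * ((gQ - bQ) * (q - cQ * bQ)) := by ring
    rw [e3] at h5c
    exact le_of_mul_le_mul_left h5c (by positivity)
  have hq2 : pQ * (q - cQ * bQ) ≤ cQ * (pQ * pQ - gQ * bQ) := by
    have e : aQ * (pQ * bQ) = (aQ * bQ) * pQ := by ring
    rw [hA1] at e
    rw [e] at hA2
    nlinarith [hA2]
  have hKEY : pQ * (pQ - bQ) ^ 2 ≤ (gQ - bQ) * (pQ * pQ - gQ * bQ) := by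
    have h1 := mul_le_mul_of_nonneg_left hB1 (le_of_lt hp0)
    have h2 := mul_le_mul_of_nonneg_left hq2 hgb
    have e1 : pQ * ((gQ - bQ) * (q - cQ * bQ))
        = (gQ - bQ) * (pQ * (q - cQ * bQ)) := by ring
    rw [e1] at h1
    have h3 : pQ * (cQ * (pQ - bQ) ^ 2)
        ≤ (gQ - bQ) * (cQ * (pQ * pQ - gQ * bQ)) := le_trans h1 h2
    have e2 : pQ * (cQ * (pQ - bQ) ^ 2) = cQ * (pQ * (pQ - bQ) ^ 2) := by ring
    have e3 : (gQ - bQ) * (cQ * (pQ * pQ - gQ * bQ))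
        = cQ * ((gQ - bQ) * (pQ * pQ - gQ * bQ)) := by ring
    rw [e2, e3] at h3
    exact le_of_mul_le_mul_left h3 hc0
  have hGOAL : gQ * bQ ≤ pQ * pQ - pQ * bQ + bQ * bQ := by
    nlinarith [hKEY, hpg, hb0, sq_nonneg (pQ - bQ)]
  -- convert to the stated form
  have ha : aQ = pQ * cQ / bQ := by
    rw [eq_div_iff (ne_of_gt hb0)]
    exact hA1
  have hrhs : aQ ^ 2 * bQ / cQ ^ 2 - aQ * bQ / cQ + bQ
      = pQ * pQ / bQ - pQ + bQ := by
    rw [ha]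
    field_simp
  rw [hrhs]
  have h6 : (gQ + pQ - bQ) * bQ ≤ pQ * pQ := by
    have e : (gQ + pQ - bQ) * bQ = gQ * bQ + pQ * bQ - bQ * bQ := by ring
    rw [e]; linarith [hGOAL]
  have h7 : gQ + pQ - bQ ≤ pQ * pQ / bQ := (le_div_iff₀ hb0).2 h6
  linarith
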